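/- Fix integers 0 < n₁ ≤ n₂ ≤ … ≤ n_m and a composition d̄ = (d₁,…,d_m) ∈ Z_{≥0}^m. If d̄ is n̄-admissible, then there exists a unique chain μ^{(0)} = (0), μ^{(j)} ∈ Ser^{n_j}_{d_j, μ^{(j−1)}} for j = 1,…,m (each μ^{(j−1)} extended by trailing zeros to length n_j) such that μ^{(m)}₊ = (d₁,…,d_m)₊. If d̄ is not n̄-admissible, no such chain exists. -/

import Mathlib

/-- A composition of length `nn` is encoded as a function `ℕ → ℕ` vanishing from
index `nn` on (0-based indexing).  `IsSerpentine nn d lam mu` says that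
`mu ∈ Ser^nn_{d,lam}` is a `d`-serpentine associated with `lam`. -/
def IsSerpentine (nn d : ℕ) (lam mu : ℕ → ℕ) : Prop :=
  (∀ i, nn ≤ i → lam i = 0) ∧
  (∀ i, nn ≤ i → mu i = 0) ∧
  (∀ i, lam i ≤ mu i) ∧
  (∑ i ∈ Finset.range nn, (mu i - lam i)) = d ∧
  (∀ i j, i < j → j < nn → lam i ≤ lam j → mu i ≤ lam j) ∧
  (∀ i j, i < j → j < nn → lam j < lam i → lam i ≤ mu j → mu i = lam i)

/-- `domSum f s` is the sum of the `s` largest entries of a (finitely supported)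
function `f : ℕ → ℕ`, i.e. the `s`-th partial sum of the dominant part `f₊`. -/
noncomputable def domSum (f : ℕ → ℕ) (s : ℕ) : ℕ :=
  sSup ((fun T : Finset ℕ => ∑ i ∈ T, f i) '' {T : Finset ℕ | T.card ≤ s})

/-- `f₊ = g₊`: the dominant parts (non-increasing reorderings, padded by trailing
zeros) of the finitely supported functions `f` and `g` coincide. -/
def DomEq (f g : ℕ → ℕ) : Prop := ∀ s, domSum f s = domSum g s

/-- `f₊ ≤ g₊` in the dominance order: `|f| = |g|` and every partial sum of the
dominant part of `g` is at least the corresponding one for `f`. -/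
def DomLE (f g : ℕ → ℕ) : Prop :=
  (∀ s, domSum f s ≤ domSum g s) ∧ ∃ N, ∀ s, N ≤ s → domSum f s = domSum g s

/-- The composition `(λ, d)`: append the entry `d` to a length-`n` composition. -/
def appendComp (n : ℕ) (lam : ℕ → ℕ) (d : ℕ) : ℕ → ℕ :=
  fun i => if i < n then lam i else if i = n then d else 0

/-- The composition `(d₁, …, d_m)`: truncate `d` to its first `m` entries. -/
def truncComp (m : ℕ) (d : ℕ → ℕ) : ℕ → ℕ := fun i => if i < m then d i else 0

/-- A chain of iterated serpentines `μ⁽⁰⁾ = (0)`, `μ⁽ʲ⁾ ∈ Ser^{n_j}_{d_j, μ⁽ʲ⁻¹⁾}`. -/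
def SerpChain (n : ℕ → ℕ) (m : ℕ) (d : ℕ → ℕ) (μ : ℕ → ℕ → ℕ) : Prop :=
  (∀ i, μ 0 i = 0) ∧ ∀ j, j < m → IsSerpentine (n j) (d j) (μ j) (μ (j + 1))

/-- `d̄ ∈ Z_{≥0}^m` is `n̄`-admissible: for each `s < m` the number of nonzero
entries among `d_0, …, d_s` is at most `n_s`. -/
def NAdmissible (n : ℕ → ℕ) (m : ℕ) (d : ℕ → ℕ) : Prop :=
  ∀ s, s < m → ((Finset.range (s + 1)).filter (fun j => d j ≠ 0)).card ≤ n s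


open Finset

/-! ### Counting infrastructure -/


/-- count of indices `< N` with `f i ≥ x` -/
def cnt (N : ℕ) (f : ℕ → ℕ) (x : ℕ) : ℕ :=
  ((Finset.range N).filter (fun i => x ≤ f i)).card

lemma cnt_antitone (N : ℕ) (f : ℕ → ℕ) {x y : ℕ} (h : x ≤ y) :
    cnt N f y ≤ cnt N f x := by
  apply Finset.card_le_card
  intro i hi
  simp only [Finset.mem_filter, Finset.mem_range] at *
  exact ⟨hi.1, le_trans h hi.2⟩

lemma cnt_le (N : ℕ) (f : ℕ → ℕ) (x : ℕ) : cnt N f x ≤ N := by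
  simpa [cnt] using Finset.card_filter_le (Finset.range N) (fun i => x ≤ f i)

lemma cnt_eq_zero (N : ℕ) (f : ℕ → ℕ) {B x : ℕ} (hB : ∀ i, f i ≤ B) (hx : B < x) :
    cnt N f x = 0 := by
  apply Finset.card_eq_zero.mpr
  apply Finset.filter_eq_empty_iff.mpr
  intro i _
  have := hB i
  omega

lemma sum_ind (fi B : ℕ) (h : fi ≤ B) :
    ∑ x ∈ Finset.Icc 1 B, (if x ≤ fi then 1 else 0) = fi := by
  have h1 : ((Finset.Icc 1 B).filter (fun x => x ≤ fi)) = Finset.Icc 1 fi := by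
    ext y
    simp only [Finset.mem_filter, Finset.mem_Icc]
    omega
  calc ∑ x ∈ Finset.Icc 1 B, (if x ≤ fi then 1 else 0)
      = ((Finset.Icc 1 B).filter (fun x => x ≤ fi)).card := (Finset.card_filter _ _).symm
    _ = fi := by rw [h1]; simp

lemma double_count (T : Finset ℕ) (f : ℕ → ℕ) (B : ℕ) (hB : ∀ i ∈ T, f i ≤ B) :
    ∑ i ∈ T, f i = ∑ x ∈ Finset.Icc 1 B, (T.filter (fun i => x ≤ f i)).card := by
  have h1 : ∀ x, (T.filter (fun i => x ≤ f i)).card = ∑ i ∈ T, if x ≤ f i then 1 else 0 :=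
    fun x => Finset.card_filter _ _
  simp_rw [h1]
  rw [Finset.sum_comm]
  apply Finset.sum_congr rfl
  intro i hi
  exact (sum_ind (f i) B (hB i hi)).symm

lemma sum_cnt (N : ℕ) (f : ℕ → ℕ) (B : ℕ) (hB : ∀ i, f i ≤ B) :
    ∑ x ∈ Finset.Icc 1 B, cnt N f x = ∑ i ∈ Finset.range N, f i :=
  (double_count (Finset.range N) f B (fun i _ => hB i)).symm

lemma antitone_filter_card {B : ℕ} (c : ℕ → ℕ) (hc : ∀ x y, x ≤ y → c y ≤ c x)
    (s : ℕ) {x : ℕ} (hx : x ∈ Finset.Icc 1 B) :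
    (s ≤ c x ↔ x ≤ ((Finset.Icc 1 B).filter (fun y => s ≤ c y)).card) := by
  simp only [Finset.mem_Icc] at hx
  constructor
  · intro h
    have hsub : Finset.Icc 1 x ⊆ (Finset.Icc 1 B).filter (fun y => s ≤ c y) := by
      intro y hy
      simp only [Finset.mem_Icc] at hy
      simp only [Finset.mem_filter, Finset.mem_Icc]
      exact ⟨⟨hy.1, le_trans hy.2 hx.2⟩, le_trans h (hc y x hy.2)⟩
    have := Finset.card_le_card hsub
    simpa using this
  · intro h
    by_contra hlt
    push_neg at hlt
    have hsub : (Finset.Icc 1 B).filter (fun y => s ≤ c y) ⊆ Finset.Icc 1 (x - 1) := by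
      intro y hy
      simp only [Finset.mem_filter, Finset.mem_Icc] at hy
      simp only [Finset.mem_Icc]
      refine ⟨hy.1.1, ?_⟩
      by_contra hy2
      push_neg at hy2
      have := hc x y (by omega)
      omega
    have := Finset.card_le_card hsub
    simp only [Nat.card_Icc] at this
    omega

lemma sum_min_succ (B : ℕ) (c : ℕ → ℕ) (s : ℕ) :
    ∑ x ∈ Finset.Icc 1 B, min (s+1) (c x)
      = (∑ x ∈ Finset.Icc 1 B, min s (c x))
        + ((Finset.Icc 1 B).filter (fun x => s+1 ≤ c x)).card := by
  rw [Finset.card_filter, ← Finset.sum_add_distrib]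
  apply Finset.sum_congr rfl
  intro x _
  by_cases h : s+1 ≤ c x <;> simp [h] <;> omega

lemma minsum_inj {B : ℕ} (c c' : ℕ → ℕ)
    (hc : ∀ x y, x ≤ y → c y ≤ c x) (hc' : ∀ x y, x ≤ y → c' y ≤ c' x)
    (h : ∀ s, ∑ x ∈ Finset.Icc 1 B, min s (c x) = ∑ x ∈ Finset.Icc 1 B, min s (c' x)) :
    ∀ x ∈ Finset.Icc 1 B, c x = c' x := by
  have ht : ∀ s, ((Finset.Icc 1 B).filter (fun x => s+1 ≤ c x)).card
      = ((Finset.Icc 1 B).filter (fun x => s+1 ≤ c' x)).card := by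
    intro s
    have h1 := sum_min_succ B c s
    have h2 := sum_min_succ B c' s
    have h3 := h s
    have h4 := h (s+1)
    omega
  intro x hx
  have le1 : ∀ (a b : ℕ → ℕ), (∀ x y, x ≤ y → a y ≤ a x) → (∀ x y, x ≤ y → b y ≤ b x) →
      (∀ s, ((Finset.Icc 1 B).filter (fun y => s+1 ≤ a y)).card
        = ((Finset.Icc 1 B).filter (fun y => s+1 ≤ b y)).card) → a x ≤ b x := by
    intro a b ha hb hab
    rcases Nat.eq_zero_or_pos (a x) with h0 | h0
    · omega
    · obtain ⟨s0, hs0⟩ : ∃ s0, a x = s0 + 1 := ⟨a x - 1, by omega⟩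
      have h1 := (antitone_filter_card a ha (s0+1) hx).mp (by omega)
      rw [hab s0] at h1
      have h2 := (antitone_filter_card b hb (s0+1) hx).mpr h1
      omega
  exact le_antisymm (le1 c c' hc hc' ht) (le1 c' c hc' hc (fun s => (ht s).symm))

lemma sum_min_add_ind (B : ℕ) (c : ℕ → ℕ) (hc : ∀ x y, x ≤ y → c y ≤ c x)
    (e : ℕ) (he : e ≤ B) (s : ℕ) :
    ∑ x ∈ Finset.Icc 1 B, min (s+1) (c x + if x ≤ e then 1 else 0)
      = max (∑ x ∈ Finset.Icc 1 B, min (s+1) (c x))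
          ((∑ x ∈ Finset.Icc 1 B, min s (c x)) + e) := by
  apply le_antisymm
  · set a := ((Finset.Icc 1 B).filter (fun y => s+1 ≤ c y)).card with ha
    rcases le_or_gt e a with hcase | hcase
    · apply le_max_of_le_left
      apply Finset.sum_le_sum
      intro x hx
      by_cases hxe : x ≤ e
      · have hxa : x ≤ a := le_trans hxe hcase
        have : s+1 ≤ c x := (antitone_filter_card c hc (s+1) hx).mpr hxa
        simp [hxe]
        omega
      · simp [hxe]
    · apply le_max_of_le_right
      have hinds : ∑ x ∈ Finset.Icc 1 B, (if x ≤ e then 1 else 0) = e := sum_ind e B he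
      calc ∑ x ∈ Finset.Icc 1 B, min (s+1) (c x + if x ≤ e then 1 else 0)
          ≤ ∑ x ∈ Finset.Icc 1 B, (min s (c x) + if x ≤ e then 1 else 0) := by
            apply Finset.sum_le_sum
            intro x hx
            rcases le_or_gt x a with hxa | hxa
            · have h1 : s+1 ≤ c x := (antitone_filter_card c hc (s+1) hx).mpr hxa
              have hxe : x ≤ e := by omega
              simp [hxe]
            · have h1 : ¬ (s+1 ≤ c x) := fun hcon =>
                absurd ((antitone_filter_card c hc (s+1) hx).mp hcon) (by omega)
              by_cases hxe : x ≤ e <;> simp [hxe] <;> omega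
        _ = (∑ x ∈ Finset.Icc 1 B, min s (c x)) + e := by
            rw [Finset.sum_add_distrib, hinds]
  · apply max_le
    · apply Finset.sum_le_sum
      intro x _
      by_cases hxe : x ≤ e <;> simp [hxe] <;> omega
    · have hinds : ∑ x ∈ Finset.Icc 1 B, (if x ≤ e then 1 else 0) = e := sum_ind e B he
      calc (∑ x ∈ Finset.Icc 1 B, min s (c x)) + e
          = ∑ x ∈ Finset.Icc 1 B, (min s (c x) + if x ≤ e then 1 else 0) := by
            rw [Finset.sum_add_distrib, hinds]
        _ ≤ ∑ x ∈ Finset.Icc 1 B, min (s+1) (c x + if x ≤ e then 1 else 0) := by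
            apply Finset.sum_le_sum
            intro x _
            by_cases hxe : x ≤ e <;> simp [hxe] <;> omega


lemma exists_top_set (N : ℕ) (f : ℕ → ℕ) (s : ℕ) :
    ∃ T : Finset ℕ, T ⊆ Finset.range N ∧ T.card ≤ s ∧
      ∀ x, 0 < x → (T.filter (fun i => x ≤ f i)).card = min s (cnt N f x) := by
  induction s with
  | zero => exact ⟨∅, by simp, by simp, fun x _ => by simp⟩
  | succ s ih =>
    obtain ⟨T, hsub, hcard, hT⟩ := ih
    by_cases hex : ((Finset.range N \ T).filter (fun i => 1 ≤ f i)).Nonempty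
    · obtain ⟨i0, hi0S, hmax⟩ := Finset.exists_max_image _ f hex
      simp only [Finset.mem_filter, Finset.mem_sdiff] at hi0S
      have hi0T : i0 ∉ T := hi0S.1.2
      refine ⟨insert i0 T, ?_, ?_, ?_⟩
      · intro j hj
        rcases Finset.mem_insert.mp hj with rfl | hj
        · exact hi0S.1.1
        · exact hsub hj
      · rw [Finset.card_insert_of_notMem hi0T]; omega
      · intro x hx
        have hfi := Finset.filter_insert (fun i => x ≤ f i) i0 T
        rcases le_or_gt (cnt N f x) s with hcs | hcs
        · have heq : T.filter (fun i => x ≤ f i) = (Finset.range N).filter (fun i => x ≤ f i) := by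
            apply Finset.eq_of_subset_of_card_le (Finset.filter_subset_filter _ hsub)
            have := hT x hx
            have hcc : ((Finset.range N).filter (fun i => x ≤ f i)).card = cnt N f x := rfl
            omega
          have hni : ¬ (x ≤ f i0) := by
            intro hcon
            have : i0 ∈ T.filter (fun i => x ≤ f i) := by
              rw [heq]; exact Finset.mem_filter.mpr ⟨Finset.mem_range.mpr (by exact Finset.mem_range.mp hi0S.1.1), hcon⟩
            exact hi0T (Finset.mem_of_mem_filter i0 this)
          rw [hfi, if_neg hni, hT x hx]
          omega
        · have hlt : (T.filter (fun i => x ≤ f i)).card < ((Finset.range N).filter (fun i => x ≤ f i)).card := by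
            have := hT x hx
            have : (T.filter (fun i => x ≤ f i)).card = s := by omega
            unfold cnt at hcs
            omega
          have hns : ¬ ((Finset.range N).filter (fun i => x ≤ f i) ⊆ T.filter (fun i => x ≤ f i)) :=
            fun hcon => absurd (Finset.card_le_card hcon) (by omega)
          obtain ⟨j, hj1, hj2⟩ := Finset.not_subset.mp hns
          simp only [Finset.mem_filter, Finset.mem_range] at hj1
          have hjT : j ∉ T := by
            intro hcon
            exact hj2 (Finset.mem_filter.mpr ⟨hcon, hj1.2⟩)
          have hjS : j ∈ (Finset.range N \ T).filter (fun i => 1 ≤ f i) := by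
            simp only [Finset.mem_filter, Finset.mem_sdiff, Finset.mem_range]
            exact ⟨⟨hj1.1, hjT⟩, by omega⟩
          have hxi0 : x ≤ f i0 := le_trans hj1.2 (hmax j hjS)
          rw [hfi, if_pos hxi0, Finset.card_insert_of_notMem (fun hcon => hi0T (Finset.mem_of_mem_filter i0 hcon))]
          rw [hT x hx]
          omega
    · refine ⟨T, hsub, le_trans hcard (Nat.le_succ s), ?_⟩
      intro x hx
      have heq : (Finset.range N).filter (fun i => x ≤ f i) = T.filter (fun i => x ≤ f i) := by
        apply Finset.Subset.antisymm
        · intro j hj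
          simp only [Finset.mem_filter, Finset.mem_range] at hj ⊢
          have hjT : j ∈ T := by
            by_contra hcon
            exact hex ⟨j, by simp only [Finset.mem_filter, Finset.mem_sdiff, Finset.mem_range]; exact ⟨⟨hj.1, hcon⟩, by omega⟩⟩
          exact ⟨hjT, hj.2⟩
        · exact Finset.filter_subset_filter _ hsub
      have : cnt N f x = (T.filter (fun i => x ≤ f i)).card := by unfold cnt; rw [heq]
      have hc := hT x hx
      omega

lemma domSum_eq_min_sum (f : ℕ → ℕ) (N B s : ℕ)
    (hsupp : ∀ i, N ≤ i → f i = 0) (hB : ∀ i, f i ≤ B) :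
    domSum f s = ∑ x ∈ Finset.Icc 1 B, min s (cnt N f x) := by
  have hTsum : ∀ T : Finset ℕ, ∑ i ∈ T, f i = ∑ i ∈ T ∩ Finset.range N, f i := by
    intro T
    apply (Finset.sum_subset Finset.inter_subset_left ?_).symm
    intro i hiT hni
    apply hsupp
    by_contra hcon
    exact hni (Finset.mem_inter.mpr ⟨hiT, Finset.mem_range.mpr (by omega)⟩)
  apply le_antisymm
  · apply csSup_le
    · exact ⟨0, ⟨∅, by simp, by simp⟩⟩
    · rintro v ⟨T, hT, rfl⟩
      simp only [Set.mem_setOf_eq] at hT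
      show ∑ i ∈ T, f i ≤ _
      rw [hTsum T, double_count _ f B (fun i _ => hB i)]
      apply Finset.sum_le_sum
      intro x hx
      have hle1 : (((T ∩ Finset.range N)).filter (fun i => x ≤ f i)).card ≤ cnt N f x :=
        Finset.card_le_card (Finset.filter_subset_filter _ Finset.inter_subset_right)
      have hle2 : (((T ∩ Finset.range N)).filter (fun i => x ≤ f i)).card ≤ s := by
        calc _ ≤ (T ∩ Finset.range N).card := Finset.card_filter_le _ _
          _ ≤ T.card := Finset.card_le_card Finset.inter_subset_left
          _ ≤ s := hT
      omega
  · obtain ⟨T, hTsub, hTcard, hT⟩ := exists_top_set N f s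
    apply le_csSup
    · refine ⟨∑ i ∈ Finset.range N, f i, ?_⟩
      rintro v ⟨T', hT', rfl⟩
      show ∑ i ∈ T', f i ≤ _
      rw [hTsum T']
      exact Finset.sum_le_sum_of_subset Finset.inter_subset_right
    · refine ⟨T, hTcard, ?_⟩
      show ∑ i ∈ T, f i = _
      rw [double_count T f B (fun i _ => hB i)]
      apply Finset.sum_congr rfl
      intro x hx
      simp only [Finset.mem_Icc] at hx
      exact hT x (by omega)


/-- `HCond d lam mu`: the increments of `mu` over `lam` tile exactly `(0,d]`. -/
def HCond (d : ℕ) (lam mu : ℕ → ℕ) : Prop :=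
  (∀ x, 0 < x → (∃ q, lam q < x ∧ x ≤ mu q) → x ≤ d) ∧
  (∀ x, 0 < x → x ≤ d → ∃ q, lam q < x ∧ x ≤ mu q)

section serpbasic

variable {nn d : ℕ} {lam mu : ℕ → ℕ}

/-- R1: the increment intervals of a serpentine are pairwise disjoint. -/
lemma inc_unique (hs : IsSerpentine nn d lam mu) {x q q' : ℕ} (hx : 0 < x)
    (h : lam q < x ∧ x ≤ mu q) (h' : lam q' < x ∧ x ≤ mu q') : q = q' := by
  obtain ⟨hl, hm, hlm, hsum, h5, h6⟩ := hs
  by_contra hne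
  -- wlog q < q'
  have key : ∀ a b : ℕ, a < b → lam a < x → x ≤ mu a → lam b < x → x ≤ mu b → False := by
    intro a b hab ha1 ha2 hb1 hb2
    have hbnn : b < nn := by
      by_contra hcon
      have := hm b (by omega)
      omega
    rcases le_or_gt (lam a) (lam b) with hcase | hcase
    · have := h5 a b hab hbnn hcase
      omega
    · have := h6 a b hab hbnn hcase (by omega)
      omega
  rcases Nat.lt_or_ge q q' with hlt | hge
  · exact key q q' hlt h.1 h.2 h'.1 h'.2
  · exact key q' q (by omega) h'.1 h'.2 h.1 h.2

open scoped Classical in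
/-- R2: counting step. -/
lemma cnt_step (hs : IsSerpentine nn d lam mu) {N : ℕ} (hN : nn ≤ N) {x : ℕ} (hx : 0 < x) :
    cnt N mu x = cnt N lam x + (if ∃ q, lam q < x ∧ x ≤ mu q then 1 else 0) := by
  obtain ⟨hl, hm, hlm, hsum, h5, h6⟩ := hs
  have hsub : (Finset.range N).filter (fun i => x ≤ lam i) ⊆ (Finset.range N).filter (fun i => x ≤ mu i) :=
    Finset.monotone_filter_right _ (fun i _ hi => le_trans hi (hlm i))
  have hsd : (Finset.range N).filter (fun i => x ≤ mu i) \ (Finset.range N).filter (fun i => x ≤ lam i)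
      = (Finset.range N).filter (fun i => lam i < x ∧ x ≤ mu i) := by
    ext i
    simp only [Finset.mem_sdiff, Finset.mem_filter, Finset.mem_range]
    constructor
    · rintro ⟨⟨h1, h2⟩, h3⟩
      refine ⟨h1, ?_, h2⟩
      by_contra hcon
      exact h3 ⟨h1, by omega⟩
    · rintro ⟨h1, h2, h3⟩
      exact ⟨⟨h1, h3⟩, fun hcon => by omega⟩
  have hcard := Finset.card_sdiff_add_card_eq_card hsub
  rw [hsd] at hcard
  unfold cnt
  by_cases hex : ∃ q, lam q < x ∧ x ≤ mu q
  · rw [if_pos hex]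
    obtain ⟨q, hq⟩ := hex
    have hqmem : q ∈ (Finset.range N).filter (fun i => lam i < x ∧ x ≤ mu i) := by
      simp only [Finset.mem_filter, Finset.mem_range]
      refine ⟨?_, hq.1, hq.2⟩
      by_contra hcon
      have := hm q (by omega)
      omega
    have hone : ((Finset.range N).filter (fun i => lam i < x ∧ x ≤ mu i)).card = 1 := by
      apply le_antisymm
      · apply Finset.card_le_one.mpr
        intro a ha b hb
        simp only [Finset.mem_filter] at ha hb
        exact inc_unique ⟨hl, hm, hlm, hsum, h5, h6⟩ hx ⟨ha.2.1, ha.2.2⟩ ⟨hb.2.1, hb.2.2⟩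
      · exact Finset.card_pos.mpr ⟨q, hqmem⟩
    omega
  · rw [if_neg hex]
    have hemp : (Finset.range N).filter (fun i => lam i < x ∧ x ≤ mu i) = ∅ := by
      apply Finset.filter_eq_empty_iff.mpr
      intro i _
      intro hcon
      exact hex ⟨i, hcon⟩
    rw [hemp] at hcard
    simpa using hcard.symm

/-- mass: total of `mu` equals total of `lam` plus `d`. -/
lemma sum_step (hs : IsSerpentine nn d lam mu) {N : ℕ} (hN : nn ≤ N) :
    ∑ i ∈ Finset.range N, mu i = (∑ i ∈ Finset.range N, lam i) + d := by
  obtain ⟨hl, hm, hlm, hsum, h5, h6⟩ := hs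
  have h1 : ∑ i ∈ Finset.range N, (mu i - lam i) = d := by
    rw [← hsum]
    apply (Finset.sum_subset (Finset.range_subset_range.mpr hN) ?_).symm
    intro i _ hi
    simp only [Finset.mem_range, not_lt] at hi
    simp [hm i hi, hl i hi]
  have h2 : ∀ i ∈ Finset.range N, mu i = (mu i - lam i) + lam i := by
    intro i _
    have := hlm i
    omega
  rw [Finset.sum_congr rfl h2, Finset.sum_add_distrib, h1]
  omega

end serpbasic


/-- restriction of a composition to its first `t` entries -/
def res (t : ℕ) (f : ℕ → ℕ) : ℕ → ℕ := fun i => if i < t then f i else 0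

section steps

/-- a serpentine with `d = 0` is trivial -/
lemma serp_d_zero {nn : ℕ} {lam mu : ℕ → ℕ} (h : IsSerpentine nn 0 lam mu) : mu = lam := by
  obtain ⟨hl, hm, hlm, hsum, -, -⟩ := h
  funext i
  rcases Nat.lt_or_ge i nn with hi | hi
  · have h0 : ∀ j ∈ Finset.range nn, mu j - lam j = 0 :=
      (Finset.sum_eq_zero_iff).mp hsum
    have := h0 i (Finset.mem_range.mpr hi)
    have := hlm i
    omega
  · rw [hm i hi, hl i hi]

lemma serp_refl {nn : ℕ} {lam : ℕ → ℕ} (hl : ∀ i, nn ≤ i → lam i = 0) :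
    IsSerpentine nn 0 lam lam :=
  ⟨hl, hl, fun _ => le_rfl, by simp, fun i j _ _ h => h, fun i j _ _ _ _ => rfl⟩

lemma hcond_refl {lam : ℕ → ℕ} : HCond 0 lam lam := by
  constructor
  · rintro x hx ⟨q, hq1, hq2⟩
    omega
  · intro x hx hxd
    omega

/-- case A: if `d ≤ lam t` then the last entry does not move -/
lemma mu_last_A {t d : ℕ} {lam mu : ℕ → ℕ} (h : IsSerpentine (t+1) d lam mu)
    (hc : HCond d lam mu) (hld : d ≤ lam t) : mu t = lam t := by
  have hlm := h.2.2.1 t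
  by_contra hne
  have hx : lam t < mu t := by omega
  have := hc.1 (lam t + 1) (by omega) ⟨t, by omega, by omega⟩
  omega

/-- case B: if `lam t < d` then the last entry jumps to `d` -/
lemma mu_last_B {t d : ℕ} {lam mu : ℕ → ℕ} (h : IsSerpentine (t+1) d lam mu)
    (hc : HCond d lam mu) (hld : lam t < d) : mu t = d := by
  obtain ⟨hl, hm, hlm, hsum, h5, h6⟩ := h
  have hled : mu t ≤ d := by
    by_contra hcon
    have := hc.1 (d + 1) (by omega) ⟨t, by omega, by omega⟩
    omega
  have P : ∀ w, lam t < w → w ≤ d → mu t < w → False := by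
    intro w
    induction w using Nat.strong_induction_on with
    | _ w IH =>
      intro hw1 hw2 hw3
      obtain ⟨q, hq1, hq2⟩ := hc.2 w (by omega) hw2
      have hqt : q ≠ t := by intro hcon; subst hcon; omega
      have hqlt : q < t := by
        by_contra hcon
        have := hm q (by omega)
        omega
      rcases le_or_gt (lam q) (lam t) with hcase | hcase
      · have := h5 q t hqlt (Nat.lt_succ_self t) hcase
        omega
      · have hmt : mu t < lam q := by
          by_contra hcon
          have := h6 q t hqlt (Nat.lt_succ_self t) hcase (by omega)
          omega
        exact IH (lam q) (by omega) hcase (by omega) hmt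
  rcases Nat.lt_or_ge (mu t) d with hcon | hge
  · exact absurd (P d hld le_rfl hcon) (fun h => h)
  · omega

/-- restriction in case A -/
lemma serp_restrict_A {t d : ℕ} {lam mu : ℕ → ℕ} (h : IsSerpentine (t+1) d lam mu)
    (hc : HCond d lam mu) (hld : d ≤ lam t) :
    IsSerpentine t d (res t lam) (res t mu) ∧ HCond d (res t lam) (res t mu) := by
  have hmt : mu t = lam t := mu_last_A h hc hld
  obtain ⟨hl, hm, hlm, hsum, h5, h6⟩ := h
  constructor
  · refine ⟨fun i hi => if_neg (by omega), fun i hi => if_neg (by omega), ?_, ?_, ?_, ?_⟩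
    · intro i
      unfold res
      by_cases hi : i < t
      · simp [hi]; exact hlm i
      · simp [hi]
    · have : ∑ i ∈ Finset.range t, (res t mu i - res t lam i)
          = ∑ i ∈ Finset.range t, (mu i - lam i) := by
        apply Finset.sum_congr rfl
        intro i hi
        simp only [Finset.mem_range] at hi
        simp [res, hi]
      rw [this]
      rw [Finset.sum_range_succ] at hsum
      omega
    · intro i j hij hjt
      simp only [res, if_pos hjt, if_pos (by omega : i < t)]
      exact h5 i j hij (by omega)
    · intro i j hij hjt
      simp only [res, if_pos hjt, if_pos (by omega : i < t)]
      exact h6 i j hij (by omega)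
  · constructor
    · rintro x hx ⟨q, hq1, hq2⟩
      have hqt : q < t := by
        by_contra hcon
        simp only [res, if_neg hcon] at hq2
        omega
      simp only [res, if_pos hqt] at hq1 hq2
      exact hc.1 x hx ⟨q, hq1, hq2⟩
    · intro x hx hxd
      obtain ⟨q, hq1, hq2⟩ := hc.2 x hx hxd
      have hqt1 : q ≠ t := by
        intro hcon; subst hcon
        omega
      have hqt : q < t := by
        by_contra hcon
        have := hm q (by omega)
        omega
      exact ⟨q, by simp [res, hqt]; omega⟩

/-- restriction in case B -/
lemma serp_restrict_B {t d : ℕ} {lam mu : ℕ → ℕ} (h : IsSerpentine (t+1) d lam mu)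
    (hc : HCond d lam mu) (hld : lam t < d) :
    IsSerpentine t (lam t) (res t lam) (res t mu) ∧ HCond (lam t) (res t lam) (res t mu) := by
  have hmt : mu t = d := mu_last_B h hc hld
  have hfull := h
  obtain ⟨hl, hm, hlm, hsum, h5, h6⟩ := h
  constructor
  · refine ⟨fun i hi => if_neg (by omega), fun i hi => if_neg (by omega), ?_, ?_, ?_, ?_⟩
    · intro i
      unfold res
      by_cases hi : i < t
      · simp [hi]; exact hlm i
      · simp [hi]
    · have heq : ∑ i ∈ Finset.range t, (res t mu i - res t lam i)
          = ∑ i ∈ Finset.range t, (mu i - lam i) := by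
        apply Finset.sum_congr rfl
        intro i hi
        simp only [Finset.mem_range] at hi
        simp [res, hi]
      rw [heq]
      rw [Finset.sum_range_succ] at hsum
      omega
    · intro i j hij hjt
      simp only [res, if_pos hjt, if_pos (by omega : i < t)]
      exact h5 i j hij (by omega)
    · intro i j hij hjt
      simp only [res, if_pos hjt, if_pos (by omega : i < t)]
      exact h6 i j hij (by omega)
  · constructor
    · rintro x hx ⟨q, hq1, hq2⟩
      have hqt : q < t := by
        by_contra hcon
        simp only [res, if_neg hcon] at hq2
        omega
      simp only [res, if_pos hqt] at hq1 hq2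
      by_contra hcon
      have hxlt : lam t < x := by omega
      have hxd : x ≤ d := hc.1 x hx ⟨q, hq1, hq2⟩
      have : q = t := inc_unique hfull hx ⟨hq1, hq2⟩ ⟨by omega, by omega⟩
      omega
    · intro x hx hxd
      obtain ⟨q, hq1, hq2⟩ := hc.2 x hx (by omega)
      have hqt1 : q ≠ t := by
        intro hcon; subst hcon
        omega
      have hqt : q < t := by
        by_contra hcon
        have := hm q (by omega)
        omega
      exact ⟨q, by simp [res, hqt]; omega⟩

lemma step_unique : ∀ nn (lam : ℕ → ℕ) (d : ℕ) (mu mu' : ℕ → ℕ),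
    IsSerpentine nn d lam mu → HCond d lam mu →
    IsSerpentine nn d lam mu' → HCond d lam mu' → mu = mu' := by
  intro nn
  induction nn with
  | zero =>
    intro lam d mu mu' h1 _ h2 _
    have hd : d = 0 := by
      have := h1.2.2.2.1
      simpa using this.symm
    subst hd
    rw [serp_d_zero h1, serp_d_zero h2]
  | succ t ih =>
    intro lam d mu mu' h1 hc1 h2 hc2
    rcases Nat.eq_zero_or_pos d with rfl | hd
    · rw [serp_d_zero h1, serp_d_zero h2]
    rcases le_or_gt d (lam t) with hcase | hcase
    · have e1 := mu_last_A h1 hc1 hcase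
      have e2 := mu_last_A h2 hc2 hcase
      obtain ⟨r1, rc1⟩ := serp_restrict_A h1 hc1 hcase
      obtain ⟨r2, rc2⟩ := serp_restrict_A h2 hc2 hcase
      have hres := ih (res t lam) d (res t mu) (res t mu') r1 rc1 r2 rc2
      funext i
      rcases Nat.lt_trichotomy i t with hi | rfl | hi
      · have := congrFun hres i
        simpa [res, hi] using this
      · rw [e1, e2]
      · rw [h1.2.1 i (by omega), h2.2.1 i (by omega)]
    · have e1 := mu_last_B h1 hc1 hcase
      have e2 := mu_last_B h2 hc2 hcase
      obtain ⟨r1, rc1⟩ := serp_restrict_B h1 hc1 hcase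
      obtain ⟨r2, rc2⟩ := serp_restrict_B h2 hc2 hcase
      have hres := ih (res t lam) (lam t) (res t mu) (res t mu') r1 rc1 r2 rc2
      funext i
      rcases Nat.lt_trichotomy i t with hi | rfl | hi
      · have := congrFun hres i
        simpa [res, hi] using this
      · rw [e1, e2]
      · rw [h1.2.1 i (by omega), h2.2.1 i (by omega)]

end steps


lemma step_exists : ∀ nn (lam : ℕ → ℕ) (d : ℕ),
    (∀ i, nn ≤ i → lam i = 0) → (d = 0 ∨ ∃ i, i < nn ∧ lam i = 0) →
    ∃ mu, IsSerpentine nn d lam mu ∧ HCond d lam mu := by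
  intro nn
  induction nn with
  | zero =>
    intro lam d hl hz
    have hd : d = 0 := by
      rcases hz with h | ⟨i, hi, -⟩
      · exact h
      · omega
    subst hd
    exact ⟨lam, serp_refl hl, hcond_refl⟩
  | succ t ih =>
    intro lam d hl hz
    rcases Nat.eq_zero_or_pos d with rfl | hd
    · exact ⟨lam, serp_refl hl, hcond_refl⟩
    have hz' : ∃ i, i < t + 1 ∧ lam i = 0 := by
      rcases hz with h | h
      · omega
      · exact h
    have hresl : ∀ i, t ≤ i → res t lam i = 0 := fun i hi => if_neg (by omega)
    rcases le_or_gt d (lam t) with hcase | hcase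
    · -- case A : keep lam t, recurse with d
      have hlt0 : 0 < lam t := by omega
      obtain ⟨i0, hi0t, hi00⟩ := hz'
      have hi0t' : i0 < t := by
        rcases Nat.lt_or_ge i0 t with h | h
        · exact h
        · exfalso; have : i0 = t := by omega
          subst this; omega
      obtain ⟨mu0, s0, c0⟩ := ih (res t lam) d hresl
        (Or.inr ⟨i0, hi0t', by simp [res, hi0t']; omega⟩)
      obtain ⟨sl, sm, slm, ssum, s5, s6⟩ := s0
      -- bound on entries of mu0 : mu0 i ≤ max (lam i) d for i < t
      have hbound : ∀ i, i < t → mu0 i ≤ max (lam i) d := by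
        intro i hit
        rcases le_or_gt (mu0 i) (res t lam i) with hle | hlt
        · simp only [res, if_pos hit] at hle; omega
        · have := c0.1 (mu0 i) (by omega) ⟨i, hlt, le_rfl⟩
          omega
      refine ⟨fun i => if i < t then mu0 i else if i = t then lam t else 0, ?_, ?_, ?_⟩
      · refine ⟨hl, ?_, ?_, ?_, ?_, ?_⟩
        · intro i hi
          simp only [if_neg (by omega : ¬ i < t), if_neg (by omega : ¬ i = t)]
        · intro i
          by_cases hit : i < t
          · simp only [if_pos hit]
            have := slm i
            simpa [res, hit] using this
          · by_cases hieq : i = t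
            · rw [hieq]; simp
            · simp only [if_neg hit, if_neg hieq]
              exact Nat.le_of_eq (hl i (by omega))
        · show (∑ i ∈ Finset.range (t+1), ((if i < t then mu0 i else if i = t then lam t else 0) - lam i)) = d
          rw [Finset.sum_range_succ]
          have heq : ∑ i ∈ Finset.range t, ((if i < t then mu0 i else if i = t then lam t else 0) - lam i)
              = ∑ i ∈ Finset.range t, (mu0 i - res t lam i) := by
            apply Finset.sum_congr rfl
            intro i hi
            simp only [Finset.mem_range] at hi
            simp [res, hi]
          rw [heq, ssum]
          have hred : (if t < t then mu0 t else if t = t then lam t else 0) = lam t := by simp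
          rw [hred]
          omega
        · intro i j hij hjt1 hll
          by_cases hjt : j < t
          · simp only [if_pos hjt, if_pos (by omega : i < t)]
            have := s5 i j hij hjt (by simpa [res, hjt, (by omega : i < t)] using hll)
            simpa [res, hjt] using this
          · have hjeq : j = t := by omega
            rw [hjeq] at hll hij ⊢
            simp only [if_pos hij]
            have := hbound i hij
            omega
        · intro i j hij hjt1 hll hlm2
          by_cases hjt : j < t
          · simp only [if_pos hjt, if_pos (by omega : i < t)] at *
            have := s6 i j hij hjt (by simpa [res, hjt, (by omega : i < t)] using hll)
              (by simpa [res, (by omega : i < t)] using hlm2)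
            simpa [res, (by omega : i < t)] using this
          · have hjeq : j = t := by omega
            rw [hjeq] at hll hlm2
            simp at hlm2
            omega
      -- HCond parts
      · rintro x hx ⟨q, hq1, hq2⟩
        by_cases hqt : q < t
        · simp only [if_pos hqt] at hq2
          exact c0.1 x hx ⟨q, by simp [res, hqt]; omega⟩
        · by_cases hqe : q = t
          · rw [hqe] at hq1 hq2
            simp at hq2
            omega
          · simp only [if_neg hqt, if_neg hqe] at hq2; omega
      · intro x hx hxd
        obtain ⟨q, hq1, hq2⟩ := c0.2 x hx hxd
        have hqt : q < t := by
          by_contra hcon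
          have := sm q (by omega)
          omega
        refine ⟨q, ?_, ?_⟩
        · simpa [res, hqt] using hq1
        · simp only [if_pos hqt]; exact hq2
    · -- case B : put d at position t, recurse with lam t
      have hz'' : lam t = 0 ∨ ∃ i, i < t ∧ res t lam i = 0 := by
        rcases Nat.eq_zero_or_pos (lam t) with h | h
        · exact Or.inl h
        · obtain ⟨i0, hi0t, hi00⟩ := hz'
          have hi0t' : i0 < t := by
            by_contra hcon
            have : i0 = t := by omega
            subst this; omega
          exact Or.inr ⟨i0, hi0t', by simp [res, hi0t', hi00]⟩
      obtain ⟨mu0, s0, c0⟩ := ih (res t lam) (lam t) hresl hz''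
      obtain ⟨sl, sm, slm, ssum, s5, s6⟩ := s0
      have hbound : ∀ i, i < t → mu0 i ≤ max (lam i) (lam t) := by
        intro i hit
        rcases le_or_gt (mu0 i) (res t lam i) with hle | hlt
        · simp only [res, if_pos hit] at hle; omega
        · have := c0.1 (mu0 i) (by omega) ⟨i, hlt, le_rfl⟩
          omega
      refine ⟨fun i => if i < t then mu0 i else if i = t then d else 0, ?_, ?_, ?_⟩
      · refine ⟨hl, ?_, ?_, ?_, ?_, ?_⟩
        · intro i hi
          simp only [if_neg (by omega : ¬ i < t), if_neg (by omega : ¬ i = t)]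
        · intro i
          by_cases hit : i < t
          · simp only [if_pos hit]
            have := slm i
            simpa [res, hit] using this
          · by_cases hieq : i = t
            · rw [hieq]; simp; omega
            · simp only [if_neg hit, if_neg hieq]
              exact Nat.le_of_eq (hl i (by omega))
        · show (∑ i ∈ Finset.range (t+1), ((if i < t then mu0 i else if i = t then d else 0) - lam i)) = d
          rw [Finset.sum_range_succ]
          have heq : ∑ i ∈ Finset.range t, ((if i < t then mu0 i else if i = t then d else 0) - lam i)
              = ∑ i ∈ Finset.range t, (mu0 i - res t lam i) := by
            apply Finset.sum_congr rfl
            intro i hi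
            simp only [Finset.mem_range] at hi
            simp [res, hi]
          rw [heq, ssum]
          have hred : (if t < t then mu0 t else if t = t then d else 0) = d := by simp
          rw [hred]
          omega
        · intro i j hij hjt1 hll
          by_cases hjt : j < t
          · simp only [if_pos hjt, if_pos (by omega : i < t)]
            have := s5 i j hij hjt (by simpa [res, hjt, (by omega : i < t)] using hll)
            simpa [res, hjt] using this
          · have hjeq : j = t := by omega
            rw [hjeq] at hll hij ⊢
            simp only [if_pos hij]
            have := hbound i hij
            omega
        · intro i j hij hjt1 hll hlm2
          by_cases hjt : j < t
          · simp only [if_pos hjt, if_pos (by omega : i < t)] at *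
            have := s6 i j hij hjt (by simpa [res, hjt, (by omega : i < t)] using hll)
              (by simpa [res, (by omega : i < t)] using hlm2)
            simpa [res, (by omega : i < t)] using this
          · have hjeq : j = t := by omega
            rw [hjeq] at hll hlm2 hij
            simp only [if_pos hij]
            -- lam t < lam i ≤ mu t = d ; show mu0 i = lam i
            by_contra hne
            have hgt : lam i < mu0 i := by
              have := slm i
              simp only [res, if_pos (by omega : i < t)] at this
              omega
            have := c0.1 (mu0 i) (by omega) ⟨i, by simp [res, (by omega : i < t)]; omega⟩
            omega
      -- HCond parts
      · rintro x hx ⟨q, hq1, hq2⟩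
        by_cases hqt : q < t
        · simp only [if_pos hqt] at hq2
          have := c0.1 x hx ⟨q, by simp [res, hqt]; omega⟩
          omega
        · by_cases hqe : q = t
          · rw [hqe] at hq1 hq2
            simp at hq2
            omega
          · simp only [if_neg hqt, if_neg hqe] at hq2; omega
      · intro x hx hxd
        rcases le_or_gt x (lam t) with hxt | hxt
        · obtain ⟨q, hq1, hq2⟩ := c0.2 x hx hxt
          have hqt : q < t := by
            by_contra hcon
            have := sm q (by omega)
            omega
          refine ⟨q, ?_, ?_⟩
          · simpa [res, hqt] using hq1
          · simp only [if_pos hqt]; exact hq2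
        · refine ⟨t, by omega, ?_⟩
          simp
          omega


/-! ### Chain infrastructure -/

/-- target counting function: number of `k < j` with `d k ≥ x`. -/
def tcnt (d : ℕ → ℕ) (j x : ℕ) : ℕ := ((Finset.range j).filter (fun k => x ≤ d k)).card

lemma tcnt_succ (d : ℕ → ℕ) (j x : ℕ) :
    tcnt d (j+1) x = tcnt d j x + (if x ≤ d j then 1 else 0) := by
  unfold tcnt
  rw [Finset.range_add_one, Finset.filter_insert]
  by_cases h : x ≤ d j
  · rw [if_pos h, if_pos h, Finset.card_insert_of_notMem (by simp)]
  · rw [if_neg h, if_neg h, Nat.add_zero]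

lemma tcnt_anti (d : ℕ → ℕ) (j : ℕ) : ∀ x y : ℕ, x ≤ y → tcnt d j y ≤ tcnt d j x := by
  intro x y hxy
  exact Finset.card_le_card (Finset.monotone_filter_right _ (fun k _ hk => le_trans hxy hk))

lemma cnt_trunc (m : ℕ) (d : ℕ → ℕ) (x : ℕ) : cnt m (truncComp m d) x = tcnt d m x := by
  unfold cnt tcnt
  apply congrArg
  apply Finset.filter_congr
  intro k hk
  simp only [Finset.mem_range] at hk
  simp [truncComp, hk]

lemma persist_step_abstract (F F' G G' : ℕ → ℕ) (e : ℕ)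
    (hrec : ∀ s, G' (s+1) = max (G (s+1)) (G s + e))
    (hconc : ∀ s, G (s+2) + G s ≤ 2 * G (s+1))
    (hF1 : ∀ s, F s ≤ F' s)
    (hF2 : ∀ s, F s + e ≤ F' (s+1))
    (hFG0 : G 0 = F 0)
    (hex : ∃ s, G s < F s) : ∃ s, G' s < F' s := by
  obtain ⟨s, hs⟩ := hex
  cases s with
  | zero => omega
  | succ s0 =>
    rcases le_or_gt (G s0 + e) (G (s0+1)) with hcb | hcb
    · refine ⟨s0+1, ?_⟩
      have h1 : G' (s0+1) = G (s0+1) := by rw [hrec s0]; exact max_eq_left hcb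
      have := hF1 (s0+1)
      omega
    · refine ⟨s0+2, ?_⟩
      have h2 := hconc s0
      have hrr := hrec (s0+1)
      have h3 := hF2 (s0+1)
      have hnorm : s0 + 1 + 1 = s0 + 2 := by omega
      rw [hnorm] at hrr h3
      have h1 : G' (s0+2) = G (s0+1) + e := by
        rw [hrr]; exact max_eq_right (by omega)
      omega

section chain

variable {n d : ℕ → ℕ} {m N B : ℕ} {μ : ℕ → ℕ → ℕ}

lemma chain_supp (hmN : ∀ k, k < m → n k ≤ N)
    (h0 : ∀ i, μ 0 i = 0)
    (hs : ∀ k, k < m → IsSerpentine (n k) (d k) (μ k) (μ (k+1))) :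
    ∀ j, j ≤ m → ∀ i, N ≤ i → μ j i = 0 := by
  intro j hj i hi
  cases j with
  | zero => exact h0 i
  | succ k =>
    have hk : k < m := by omega
    exact (hs k hk).2.1 i (le_trans (hmN k hk) hi)

lemma chain_mass (hmN : ∀ k, k < m → n k ≤ N)
    (h0 : ∀ i, μ 0 i = 0)
    (hs : ∀ k, k < m → IsSerpentine (n k) (d k) (μ k) (μ (k+1))) :
    ∀ j, j ≤ m → ∑ i ∈ Finset.range N, μ j i = ∑ k ∈ Finset.range j, d k := by
  intro j
  induction j with
  | zero =>
    intro _
    simp only [Finset.range_zero, Finset.sum_empty]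
    exact Finset.sum_eq_zero (fun i _ => h0 i)
  | succ j ih =>
    intro hj
    have hjm : j < m := by omega
    rw [sum_step (hs j hjm) (hmN j hjm), ih (by omega), Finset.sum_range_succ]

lemma chain_cnt_of_hcond (hmN : ∀ k, k < m → n k ≤ N)
    (h0 : ∀ i, μ 0 i = 0) :
    ∀ j, j ≤ m →
    (∀ k, k < j → IsSerpentine (n k) (d k) (μ k) (μ (k+1))) →
    (∀ k, k < j → HCond (d k) (μ k) (μ (k+1))) →
    ∀ x, 0 < x → cnt N (μ j) x = tcnt d j x := by
  intro j
  induction j with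
  | zero =>
    intro _ hs hc x hx
    have h1 : cnt N (μ 0) x = 0 := by
      apply Finset.card_eq_zero.mpr
      apply Finset.filter_eq_empty_iff.mpr
      intro i _
      have := h0 i
      omega
    have h2 : tcnt d 0 x = 0 := by simp [tcnt]
    omega
  | succ j ih =>
    intro hj hs hc x hx
    have hjm : j < m := by omega
    have hstep := cnt_step (hs j (by omega)) (hmN j hjm) hx
    have hhc := hc j (by omega)
    have hiff : (∃ q, μ j q < x ∧ x ≤ μ (j+1) q) ↔ x ≤ d j :=
      ⟨fun h => hhc.1 x hx h, fun h => hhc.2 x hx h⟩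
    rw [hstep, ih (by omega) (fun k hk => hs k (by omega)) (fun k hk => hc k (by omega)) x hx,
      tcnt_succ]
    congr 1
    by_cases hex : ∃ q, μ j q < x ∧ x ≤ μ (j+1) q
    · rw [if_pos hex, if_pos (hiff.mp hex)]
    · rw [if_neg hex, if_neg (fun h => hex (hiff.mpr h))]

open scoped Classical in
/-- the persistence argument: a chain whose endpoint has the dominant part of `d`
satisfies the exact counting identity at every intermediate step. -/
lemma chain_cnt_of_domEq (hm : 0 < m)
    (hmN : ∀ k, k < m → n k ≤ N)
    (hNm : n (m-1) ≤ N)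
    (hB : B = ∑ k ∈ Finset.range m, d k)
    (hch : SerpChain n m d μ) (hdom : DomEq (μ m) (truncComp m d)) :
    ∀ j, j ≤ m → ∀ x, 0 < x → cnt N (μ j) x = tcnt d j x := by
  obtain ⟨h0, hser⟩ := hch
  have hsupN : ∀ j, j ≤ m → ∀ i, N ≤ i → μ j i = 0 := chain_supp hmN h0 hser
  have hmass : ∀ j, j ≤ m → ∑ i ∈ Finset.range N, μ j i = ∑ k ∈ Finset.range j, d k :=
    chain_mass hmN h0 hser
  have hdB : ∀ k, k < m → d k ≤ B := by
    intro k hk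
    rw [hB]
    exact Finset.single_le_sum (fun _ _ => Nat.zero_le _) (Finset.mem_range.mpr hk)
  have hBent : ∀ j, j ≤ m → ∀ i, μ j i ≤ B := by
    intro j hj i
    rcases Nat.lt_or_ge i N with h | h
    · calc μ j i ≤ ∑ i ∈ Finset.range N, μ j i :=
            Finset.single_le_sum (fun _ _ => Nat.zero_le _) (Finset.mem_range.mpr h)
        _ = ∑ k ∈ Finset.range j, d k := hmass j hj
        _ ≤ ∑ k ∈ Finset.range m, d k :=
            Finset.sum_le_sum_of_subset (Finset.range_subset_range.mpr hj)
        _ = B := hB.symm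
    · rw [hsupN j hj i h]
      exact Nat.zero_le B
  -- the two potential functions
  set F : ℕ → ℕ → ℕ := fun j s => ∑ x ∈ Finset.Icc 1 B, min s (cnt N (μ j) x) with hF
  set G : ℕ → ℕ → ℕ := fun j s => ∑ x ∈ Finset.Icc 1 B, min s (tcnt d j x) with hG
  have hcstep : ∀ j, j < m → ∀ x, 0 < x →
      cnt N (μ (j+1)) x = cnt N (μ j) x + (if ∃ q, μ j q < x ∧ x ≤ μ (j+1) q then 1 else 0) :=
    fun j hj x hx => cnt_step (hser j hj) (hmN j hj) hx
  have hFrw : ∀ j, j < m → ∀ s, F (j+1) s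
      = ∑ x ∈ Finset.Icc 1 B, min s (cnt N (μ j) x + (if ∃ q, μ j q < x ∧ x ≤ μ (j+1) q then 1 else 0)) := by
    intro j hj s
    apply Finset.sum_congr rfl
    intro x hx
    simp only [Finset.mem_Icc] at hx
    rw [hcstep j hj x (by omega)]
  have hindsum : ∀ j, j < m →
      ∑ x ∈ Finset.Icc 1 B, (if ∃ q, μ j q < x ∧ x ≤ μ (j+1) q then 1 else 0) = d j := by
    intro j hj
    have h1 : ∑ x ∈ Finset.Icc 1 B, cnt N (μ (j+1)) x = ∑ k ∈ Finset.range (j+1), d k := by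
      rw [sum_cnt N (μ (j+1)) B (hBent (j+1) (by omega)), hmass (j+1) (by omega)]
    have h2 : ∑ x ∈ Finset.Icc 1 B, cnt N (μ j) x = ∑ k ∈ Finset.range j, d k := by
      rw [sum_cnt N (μ j) B (hBent j (by omega)), hmass j (by omega)]
    have h3 : ∑ x ∈ Finset.Icc 1 B, cnt N (μ (j+1)) x
        = (∑ x ∈ Finset.Icc 1 B, cnt N (μ j) x)
          + ∑ x ∈ Finset.Icc 1 B, (if ∃ q, μ j q < x ∧ x ≤ μ (j+1) q then 1 else 0) := by
      rw [← Finset.sum_add_distrib]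
      apply Finset.sum_congr rfl
      intro x hx
      simp only [Finset.mem_Icc] at hx
      exact hcstep j hj x (by omega)
    rw [Finset.sum_range_succ] at h1
    omega
  have hF1 : ∀ j, j < m → ∀ s, F j s ≤ F (j+1) s := by
    intro j hj s
    rw [hFrw j hj s]
    apply Finset.sum_le_sum
    intro x _
    by_cases hex : ∃ q, μ j q < x ∧ x ≤ μ (j+1) q <;> simp [hex] <;> omega
  have hF2 : ∀ j, j < m → ∀ s, F j s + d j ≤ F (j+1) (s+1) := by
    intro j hj s
    rw [hFrw j hj (s+1)]
    calc F j s + d j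
        = ∑ x ∈ Finset.Icc 1 B,
            (min s (cnt N (μ j) x) + (if ∃ q, μ j q < x ∧ x ≤ μ (j+1) q then 1 else 0)) := by
          rw [Finset.sum_add_distrib, hindsum j hj]
      _ ≤ _ := by
          apply Finset.sum_le_sum
          intro x _
          by_cases hex : ∃ q, μ j q < x ∧ x ≤ μ (j+1) q <;> simp [hex] <;> omega
  have hGrec : ∀ j, j < m → ∀ s, G (j+1) (s+1) = max (G j (s+1)) (G j s + d j) := by
    intro j hj s
    have h1 : G (j+1) (s+1)
        = ∑ x ∈ Finset.Icc 1 B, min (s+1) (tcnt d j x + (if x ≤ d j then 1 else 0)) := by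
      apply Finset.sum_congr rfl
      intro x _
      rw [tcnt_succ]
    rw [h1]
    exact sum_min_add_ind B (tcnt d j) (tcnt_anti d j) (d j) (hdB j hj) s
  have hGconc : ∀ j s, G j (s+2) + G j s ≤ 2 * G j (s+1) := by
    intro j s
    have h1 := sum_min_succ B (tcnt d j) s
    have h2 := sum_min_succ B (tcnt d j) (s+1)
    rw [show s+1+1 = s+2 from by omega] at h2
    have h3 : ((Finset.Icc 1 B).filter (fun x => s+1+1 ≤ tcnt d j x)).card
        ≤ ((Finset.Icc 1 B).filter (fun x => s+1 ≤ tcnt d j x)).card := by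
      apply Finset.card_le_card
      exact Finset.monotone_filter_right _ (fun x hx => by omega)
    rw [show s+1+1 = s+2 from by omega] at h3
    show (∑ x ∈ Finset.Icc 1 B, min (s+2) (tcnt d j x)) + (∑ x ∈ Finset.Icc 1 B, min s (tcnt d j x))
      ≤ 2 * ∑ x ∈ Finset.Icc 1 B, min (s+1) (tcnt d j x)
    omega
  have hFG0 : ∀ j, G j 0 = F j 0 := by
    intro j
    show (∑ x ∈ Finset.Icc 1 B, min 0 (tcnt d j x)) = ∑ x ∈ Finset.Icc 1 B, min 0 (cnt N (μ j) x)
    simp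
  have hbase : ∀ s, F 0 s = G 0 s := by
    intro s
    apply Finset.sum_congr rfl
    intro x hx
    simp only [Finset.mem_Icc] at hx
    congr 1
    have h1 : cnt N (μ 0) x = 0 := by
      apply Finset.card_eq_zero.mpr
      apply Finset.filter_eq_empty_iff.mpr
      intro i _
      have := h0 i
      omega
    have h2 : tcnt d 0 x = 0 := by simp [tcnt]
    rw [h1, h2]
  have hGleF : ∀ j, j ≤ m → ∀ s, G j s ≤ F j s := by
    intro j
    induction j with
    | zero => intro _ s; rw [hbase s]
    | succ j ih =>
      intro hj s
      have hjm : j < m := by omega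
      cases s with
      | zero => rw [hFG0 (j+1)]
      | succ s0 =>
        rw [hGrec j hjm s0]
        apply max_le
        · exact le_trans (ih (by omega) (s0+1)) (hF1 j hjm (s0+1))
        · exact le_trans (Nat.add_le_add_right (ih (by omega) s0) (d j)) (hF2 j hjm s0)
  have hFm : ∀ s, F m s = G m s := by
    intro s
    have h1 : domSum (μ m) s = F m s :=
      domSum_eq_min_sum (μ m) N B s (hsupN m le_rfl) (hBent m le_rfl)
    have h2 : domSum (truncComp m d) s = G m s := by
      rw [domSum_eq_min_sum (truncComp m d) m B s
        (fun i hi => by simp [truncComp]; omega)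
        (fun i => by
          by_cases hi : i < m
          · simp only [truncComp, if_pos hi]
            exact hdB i hi
          · simp [truncComp, hi])]
      apply Finset.sum_congr rfl
      intro x _
      rw [cnt_trunc]
    rw [← h1, ← h2]
    exact hdom s
  have hFG : ∀ j, j ≤ m → ∀ s, F j s = G j s := by
    intro j hj
    by_contra hcon
    push_neg at hcon
    obtain ⟨s, hs⟩ := hcon
    have hs' : G j s < F j s := lt_of_le_of_ne (hGleF j hj s) (fun h => hs h.symm)
    have up : ∀ k, j ≤ k → k ≤ m → ∃ s, G k s < F k s := by
      intro k hk1
      induction k, hk1 using Nat.le_induction with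
      | base => intro _; exact ⟨s, hs'⟩
      | succ k hk ih =>
        intro hkm
        have hkm' : k < m := by omega
        exact persist_step_abstract (F k) (F (k+1)) (G k) (G (k+1)) (d k)
          (hGrec k hkm') (hGconc k) (hF1 k hkm') (hF2 k hkm') (hFG0 k) (ih (by omega))
    obtain ⟨s', hs''⟩ := up m hj le_rfl
    have := hFm s'
    omega
  intro j hj x hx
  rcases le_or_gt x B with hxB | hxB
  · exact minsum_inj (cnt N (μ j)) (tcnt d j)
      (fun x y hxy => cnt_antitone N (μ j) hxy)
      (tcnt_anti d j)
      (hFG j hj) x (Finset.mem_Icc.mpr ⟨by omega, hxB⟩)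
  · rw [cnt_eq_zero N (μ j) (hBent j hj) hxB]
    symm
    apply Finset.card_eq_zero.mpr
    apply Finset.filter_eq_empty_iff.mpr
    intro k hk
    simp only [Finset.mem_range] at hk
    have := hdB k (by omega)
    omega

end chain

/-- Corollary 1.10.  If `d̄` is `n̄`-admissible, there is a unique
chain of iterated serpentines `μ⁽⁰⁾ = (0)`, `μ⁽ʲ⁾ ∈ Ser^{n_j}_{d_j, μ⁽ʲ⁻¹⁾}`
with `μ⁽ᵐ⁾₊ = (d₁,…,d_m)₊`; if `d̄` is not `n̄`-admissible, no such chain exists. -/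
theorem chain_exists_unique_iff_admissible (m : ℕ) (hm : 0 < m)
    (n : ℕ → ℕ) (hn0 : 0 < n 0)
    (hmono : ∀ j k, j ≤ k → k < m → n j ≤ n k)
    (d : ℕ → ℕ) :
    (NAdmissible n m d →
      (∃ μ, SerpChain n m d μ ∧ DomEq (μ m) (truncComp m d)) ∧
      (∀ μ μ', SerpChain n m d μ → DomEq (μ m) (truncComp m d) →
        SerpChain n m d μ' → DomEq (μ' m) (truncComp m d) →
        ∀ j, j ≤ m → μ j = μ' j)) ∧
    (¬ NAdmissible n m d →
      ¬ ∃ μ, SerpChain n m d μ ∧ DomEq (μ m) (truncComp m d)) := by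
  classical
  -- global constants
  set N := n (m-1) with hN
  set B := ∑ k ∈ Finset.range m, d k with hB
  have hmN : ∀ k, k < m → n k ≤ N := fun k hk => hmono k (m-1) (by omega) (by omega)
  have hdB : ∀ k, k < m → d k ≤ B := by
    intro k hk
    rw [hB]
    exact Finset.single_le_sum (fun _ _ => Nat.zero_le _) (Finset.mem_range.mpr hk)
  have htcsupp : ∀ i, m ≤ i → truncComp m d i = 0 := by
    intro i hi
    simp [truncComp]
    omega
  have htcB : ∀ i, truncComp m d i ≤ B := by
    intro i
    by_cases hi : i < m
    · simp only [truncComp, if_pos hi]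
      exact hdB i hi
    · simp [truncComp, hi]
  -- the derived per-step HCond for chains achieving the dominant part of d
  have key : ∀ ρ : ℕ → ℕ → ℕ, SerpChain n m d ρ → DomEq (ρ m) (truncComp m d) →
      (∀ j, j ≤ m → ∀ x, 0 < x → cnt N (ρ j) x = tcnt d j x) := by
    intro ρ hch hdom
    exact chain_cnt_of_domEq hm hmN (hmN (m-1) (by omega)) hB hch hdom
  have keyH : ∀ ρ : ℕ → ℕ → ℕ, SerpChain n m d ρ → DomEq (ρ m) (truncComp m d) →
      ∀ k, k < m → HCond (d k) (ρ k) (ρ (k+1)) := by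
    intro ρ hch hdom k hk
    have hcnt := key ρ hch hdom
    have hstep : ∀ x, 0 < x → cnt N (ρ (k+1)) x
        = cnt N (ρ k) x + (if ∃ q, ρ k q < x ∧ x ≤ ρ (k+1) q then 1 else 0) :=
      fun x hx => cnt_step (hch.2 k hk) (hmN k hk) hx
    constructor
    · intro x hx hex
      have h1 := hstep x hx
      rw [if_pos hex, hcnt (k+1) (by omega) x hx, hcnt k (by omega) x hx, tcnt_succ] at h1
      by_contra hcon
      rw [if_neg hcon] at h1
      omega
    · intro x hx hxd
      have h1 := hstep x hx
      rw [hcnt (k+1) (by omega) x hx, hcnt k (by omega) x hx, tcnt_succ, if_pos hxd] at h1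
      by_contra hcon
      rw [if_neg hcon] at h1
      omega
  constructor
  · -- admissible case
    intro hadm
    constructor
    · -- existence
      have build : ∀ j, j ≤ m → ∃ μ : ℕ → ℕ → ℕ, (∀ i, μ 0 i = 0) ∧
          (∀ k, k < j → IsSerpentine (n k) (d k) (μ k) (μ (k+1)) ∧ HCond (d k) (μ k) (μ (k+1))) := by
        intro j
        induction j with
        | zero => exact fun _ => ⟨fun _ _ => 0, fun _ => rfl, fun k hk => absurd hk (Nat.not_lt_zero k)⟩
        | succ j ihj =>
          intro hj1
          obtain ⟨μ, h0, hgood⟩ := ihj (by omega)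
          have hjm : j < m := by omega
          have hser : ∀ k, k < j → IsSerpentine (n k) (d k) (μ k) (μ (k+1)) :=
            fun k hk => (hgood k hk).1
          have hhc : ∀ k, k < j → HCond (d k) (μ k) (μ (k+1)) :=
            fun k hk => (hgood k hk).2
          have hsupp : ∀ i, n j ≤ i → μ j i = 0 := by
            intro i hi
            cases j with
            | zero => exact h0 i
            | succ k =>
              exact (hser k (by omega)).2.1 i
                (le_trans (hmono k (k+1) (by omega) hjm) hi)
          have hcnt : ∀ x, 0 < x → cnt N (μ j) x = tcnt d j x :=
            chain_cnt_of_hcond (m := m) hmN h0 j (by omega) hser hhc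
          have hzero : d j = 0 ∨ ∃ i, i < n j ∧ μ j i = 0 := by
            rcases Nat.eq_zero_or_pos (d j) with h | h
            · exact Or.inl h
            · right
              by_contra hcon
              push_neg at hcon
              have hsub : Finset.range (n j) ⊆ (Finset.range N).filter (fun i => 1 ≤ μ j i) := by
                intro i hi
                simp only [Finset.mem_range] at hi
                simp only [Finset.mem_filter, Finset.mem_range]
                have := hcon i hi
                exact ⟨lt_of_lt_of_le hi (hmN j hjm), by omega⟩
              have h1 : n j ≤ cnt N (μ j) 1 := by
                have := Finset.card_le_card hsub
                simpa [cnt] using this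
              have hadmj := hadm j hjm
              have h2 : ((Finset.range (j+1)).filter (fun k => d k ≠ 0)).card = tcnt d j 1 + 1 := by
                unfold tcnt
                rw [Finset.range_add_one, Finset.filter_insert, if_pos (by omega : d j ≠ 0)]
                rw [Finset.card_insert_of_notMem (by simp)]
                have hfc : Finset.filter (fun k => d k ≠ 0) (Finset.range j)
                    = Finset.filter (fun k => 1 ≤ d k) (Finset.range j) :=
                  Finset.filter_congr (fun k _ => by omega)
                rw [hfc]
              have h3 := hcnt 1 one_pos
              omega
          obtain ⟨ν, hν1, hν2⟩ := step_exists (n j) (μ j) (d j) hsupp hzero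
          refine ⟨fun k => if k = j+1 then ν else μ k, ?_, ?_⟩
          · intro i
            simp only [if_neg (by omega : ¬ (0:ℕ) = j+1)]
            exact h0 i
          · intro k hk
            rcases Nat.lt_or_ge k j with hkj | hkj
            · simp only [if_neg (by omega : ¬ k = j+1), if_neg (by omega : ¬ k+1 = j+1)]
              exact hgood k hkj
            · have hkeq : k = j := by omega
              have e1 : (if k = j+1 then ν else μ k) = μ j := by
                rw [if_neg (by omega : ¬ k = j+1), hkeq]
              have e2 : (if k+1 = j+1 then ν else μ (k+1)) = ν :=
                if_pos (by omega : k+1 = j+1)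
              show IsSerpentine (n k) (d k) (if k = j+1 then ν else μ k)
                  (if k+1 = j+1 then ν else μ (k+1))
                ∧ HCond (d k) (if k = j+1 then ν else μ k) (if k+1 = j+1 then ν else μ (k+1))
              rw [e1, e2, hkeq]
              exact ⟨hν1, hν2⟩
      obtain ⟨μ, h0, hgood⟩ := build m le_rfl
      have hser : ∀ k, k < m → IsSerpentine (n k) (d k) (μ k) (μ (k+1)) :=
        fun k hk => (hgood k hk).1
      have hcnt : ∀ x, 0 < x → cnt N (μ m) x = tcnt d m x :=
        chain_cnt_of_hcond (m := m) hmN h0 m le_rfl hser (fun k hk => (hgood k hk).2)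
      refine ⟨μ, ⟨h0, hser⟩, ?_⟩
      intro s
      have hsupN : ∀ i, N ≤ i → μ m i = 0 :=
        chain_supp (m := m) hmN h0 hser m le_rfl
      have hmass := chain_mass (m := m) hmN h0 hser m le_rfl
      have hBent : ∀ i, μ m i ≤ B := by
        intro i
        rcases Nat.lt_or_ge i N with h | h
        · calc μ m i ≤ ∑ i ∈ Finset.range N, μ m i :=
              Finset.single_le_sum (fun _ _ => Nat.zero_le _) (Finset.mem_range.mpr h)
            _ = B := by rw [hmass]
        · rw [hsupN i h]
          exact Nat.zero_le B
      rw [domSum_eq_min_sum (μ m) N B s hsupN hBent,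
        domSum_eq_min_sum (truncComp m d) m B s htcsupp htcB]
      apply Finset.sum_congr rfl
      intro x hx
      simp only [Finset.mem_Icc] at hx
      rw [cnt_trunc, hcnt x (by omega)]
    · -- uniqueness
      intro μ μ' hch hdom hch' hdom'
      have hc1 := keyH μ hch hdom
      have hc2 := keyH μ' hch' hdom'
      intro j
      induction j with
      | zero =>
        intro _
        funext i
        rw [hch.1 i, hch'.1 i]
      | succ j ihj =>
        intro hj
        have hjm : j < m := by omega
        have he : μ j = μ' j := ihj (by omega)
        have hs2 : IsSerpentine (n j) (d j) (μ j) (μ' (j+1)) := by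
          rw [he]
          exact hch'.2 j hjm
        have hhc2 : HCond (d j) (μ j) (μ' (j+1)) := by
          rw [he]
          exact hc2 j hjm
        exact step_unique (n j) (μ j) (d j) (μ (j+1)) (μ' (j+1))
          (hch.2 j hjm) (hc1 j hjm) hs2 hhc2
  · -- non-admissible case
    rintro hnadm ⟨μ, hch, hdom⟩
    apply hnadm
    intro s hs
    have hcnt := key μ hch hdom (s+1) (by omega) 1 one_pos
    have hle : cnt N (μ (s+1)) 1 ≤ n s := by
      have hsub : (Finset.range N).filter (fun i => 1 ≤ μ (s+1) i) ⊆ Finset.range (n s) := by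
        intro i hi
        simp only [Finset.mem_filter, Finset.mem_range] at hi
        simp only [Finset.mem_range]
        by_contra hcon
        have := (hch.2 s hs).2.1 i (by omega)
        omega
      have := Finset.card_le_card hsub
      simpa [cnt] using this
    have heq : ((Finset.range (s+1)).filter (fun j => d j ≠ 0)).card = tcnt d (s+1) 1 := by
      unfold tcnt
      exact congrArg Finset.card (Finset.filter_congr (fun k _ => by omega))
    omega
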